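/- Let (X,.) be an n-space and let A ⊆ X be a closed invariant nonempty subset (so that (A,.) is an n-space with the restricted action). Then every map g ∈ C*(A,.) extends to a map g̃ ∈ C*(X,.) such that sup_{a ∈ A} ‖g(a)‖ = sup_{x ∈ X} ‖g̃(x)‖. -/

import Mathlib

open scoped ZeroAtInfty Matrix.Norms.L2Operator

noncomputable section

/-- The C*-algebra of complex `n × n` matrices (with the operator norm). -/
abbrev MatC (n : ℕ) : Type := Matrix (Fin n) (Fin n) ℂ

/-- The unitary group `𝒰ₙ` of complex `n × n` matrices. -/
abbrev UG (n : ℕ) := Matrix.unitaryGroup (Fin n) ℂ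

/-- Conjugation action of the unitary group on `n × n` matrices: `𝔲.A = U * A * U⁻¹`.
Central (i.e. scalar) unitaries act trivially, so this also encodes the action of
`Uₙ = 𝒰ₙ / Z(𝒰ₙ)` on `Mₙ`. -/
def uConj {n : ℕ} (U : UG n) (A : MatC n) : MatC n :=
  (U : MatC n) * A * (star U : MatC n)

/-- `(X, •)` is an `n`-space: a locally compact Hausdorff space with a continuous free action
of `Uₙ = 𝒰ₙ / Z(𝒰ₙ)`, encoded as a continuous action of the unitary group `𝒰ₙ` in which the
center `Z(𝒰ₙ) = 𝕋·I` acts trivially and every point stabilizer is exactly the center. -/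
def IsNSpace (n : ℕ) (X : Type*) [TopologicalSpace X] [MulAction (UG n) X] : Prop :=
  T2Space X ∧ LocallyCompactSpace X ∧
  Continuous (fun p : UG n × X => p.1 • p.2) ∧
  (∀ U ∈ Subgroup.center (UG n), ∀ x : X, U • x = x) ∧
  (∀ (U : UG n) (x : X), U • x = x → U ∈ Subgroup.center (UG n))

/-- The C*-algebra `C*(X, •)` of all continuous equivariant maps `X → Mₙ` vanishing at
infinity, as a (non-unital) star subalgebra of `C₀(X, Mₙ)`. -/
def CstarN (n : ℕ) (X : Type*) [TopologicalSpace X] [MulAction (UG n) X] :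
    NonUnitalStarSubalgebra ℂ C₀(X, MatC n) where
  carrier := {f | ∀ (U : UG n) (x : X), f (U • x) = uConj U (f x)}
  add_mem' := by
    intro f g hf hg U x
    simp only [ZeroAtInftyContinuousMap.coe_add, Pi.add_apply, hf U x, hg U x, uConj,
      Matrix.mul_add, Matrix.add_mul]
  zero_mem' := by
    intro U x
    simp [uConj]
  mul_mem' := by
    intro f g hf hg U x
    have h1 : (star U : MatC n) * (U : MatC n) = 1 := Matrix.UnitaryGroup.star_mul_self U
    simp only [ZeroAtInftyContinuousMap.coe_mul, Pi.mul_apply, hf U x, hg U x, uConj]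
    calc (U : MatC n) * f x * (star U : MatC n) * ((U : MatC n) * g x * (star U : MatC n))
        = (U : MatC n) * f x * ((star U : MatC n) * (U : MatC n)) * g x * (star U : MatC n) := by
          noncomm_ring
      _ = (U : MatC n) * (f x * g x) * (star U : MatC n) := by rw [h1]; noncomm_ring
  smul_mem' := by
    intro c f hf U x
    simp only [ZeroAtInftyContinuousMap.coe_smul, Pi.smul_apply, hf U x, uConj,
      Matrix.smul_mul, Matrix.mul_smul]
  star_mem' := by
    intro f hf U x
    simp only [ZeroAtInftyContinuousMap.coe_star, Pi.star_apply, hf U x, uConj, star_mul,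
      star_star]
    noncomm_ring


/-! ### Auxiliary material for the proof -/

section Aux

lemma norm_uConj {n : ℕ} (U : UG n) (M : MatC n) : ‖uConj U M‖ = ‖M‖ := by
  rw [uConj, mul_assoc, ← Unitary.coe_star (U := U),
    CStarRing.norm_coe_unitary_mul (U : unitary (MatC n))
      (M * ((star U : unitary (MatC n)) : MatC n)),
    CStarRing.norm_mul_coe_unitary M (star U)]

lemma uConj_mul {n : ℕ} (V U : UG n) (M : MatC n) :
    uConj (V * U) M = uConj V (uConj U M) := by
  show (V : MatC n) * (U : MatC n) * M * star ((V : MatC n) * (U : MatC n)) = _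
  rw [star_mul]
  show _ = (V : MatC n) * ((U : MatC n) * M * star (U : MatC n)) * star (V : MatC n)
  noncomm_ring

/-- Conjugation as a continuous linear map. -/
def uConjCLM {n : ℕ} (V : UG n) : MatC n →L[ℝ] MatC n :=
  LinearMap.toContinuousLinearMap
    { toFun := uConj V
      map_add' := by intro x y; simp [uConj, Matrix.mul_add, Matrix.add_mul]
      map_smul' := by intro c x; simp [uConj, Matrix.mul_smul, Matrix.smul_mul] }

@[simp] lemma uConjCLM_apply {n : ℕ} (V : UG n) (M : MatC n) : uConjCLM V M = uConj V M := rfl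

instance (n : ℕ) : IsTopologicalGroup (UG n) where
  continuous_mul := Continuous.subtype_mk
    ((continuous_subtype_val.comp continuous_fst).matrix_mul
      (continuous_subtype_val.comp continuous_snd)) _
  continuous_inv := Continuous.subtype_mk
    continuous_subtype_val.matrix_conjTranspose _

instance (n : ℕ) : CompactSpace (UG n) := by
  have main : IsCompact (Matrix.unitaryGroup (Fin n) ℂ : Set (MatC n)) := ?_
  · exact isCompact_iff_compactSpace.mp main
  have hsub : (Matrix.unitaryGroup (Fin n) ℂ : Set (MatC n)) ⊆
      Set.univ.pi fun _ : Fin n => Set.univ.pi fun _ : Fin n => Metric.closedBall (0:ℂ) 1 := by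
    intro M hM i _ j _
    simpa [Complex.dist_eq] using entry_norm_bound_of_unitary hM i j
  have hcpt : IsCompact (Set.univ.pi fun _ : Fin n =>
      Set.univ.pi fun _ : Fin n => Metric.closedBall (0:ℂ) 1) :=
    isCompact_univ_pi fun _ => isCompact_univ_pi fun _ => isCompact_closedBall _ _
  have hclosed : IsClosed (Matrix.unitaryGroup (Fin n) ℂ : Set (MatC n)) := by
    have : (Matrix.unitaryGroup (Fin n) ℂ : Set (MatC n)) =
        {M : MatC n | star M * M = 1} ∩ {M : MatC n | M * star M = 1} := by
      ext M; exact Unitary.mem_iff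
    rw [this]
    exact (isClosed_singleton.preimage
        ((continuous_id.matrix_conjTranspose).matrix_mul continuous_id)).inter
      (isClosed_singleton.preimage (continuous_id.matrix_mul continuous_id.matrix_conjTranspose))
  exact hcpt.of_isClosed_subset hclosed hsub

instance (n : ℕ) : MeasurableSpace (UG n) := borel _
instance (n : ℕ) : BorelSpace (UG n) := ⟨rfl⟩
instance (n : ℕ) : Nonempty (UG n) := ⟨1⟩

/-- Normalized Haar measure on the unitary group. -/
def haarUG (n : ℕ) : MeasureTheory.Measure (UG n) :=
  MeasureTheory.Measure.haarMeasure (⊤ : TopologicalSpace.PositiveCompacts (UG n))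

instance (n : ℕ) : MeasureTheory.IsProbabilityMeasure (haarUG n) := by
  constructor
  have h := MeasureTheory.Measure.haarMeasure_self
    (K₀ := (⊤ : TopologicalSpace.PositiveCompacts (UG n)))
  simpa [haarUG] using h

instance (n : ℕ) : (haarUG n).IsMulLeftInvariant := by
  unfold haarUG; infer_instance

universe uX uE in
open Filter Topology in
lemma exists_c0_extension {X : Type uX} [TopologicalSpace X] [T2Space X] [LocallyCompactSpace X]
    {E : Type uE} [TopologicalSpace E] [Zero E] [T2Space E] [TietzeExtension.{uX, uE} E]
    {A : Set X} (hA : IsClosed A) (g : C(A, E))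
    (hg0 : Filter.Tendsto g (Filter.cocompact A) (𝓝 0)) :
    ∃ f : X → E, Continuous f ∧ Filter.Tendsto f (Filter.cocompact X) (𝓝 0) ∧
      ∀ a : A, f a = g a := by
  let e : OnePoint A → OnePoint X := OnePoint.map ((↑) : A → X)
  have he_cont : Continuous e :=
    OnePoint.continuous_map continuous_subtype_val
      (by
        rw [Filter.coclosedCompact_eq_cocompact, Filter.coclosedCompact_eq_cocompact]
        exact hA.isClosedEmbedding_subtypeVal.tendsto_cocompact)
  have he : Topology.IsClosedEmbedding e :=
    he_cont.isClosedEmbedding (Option.map_injective Subtype.val_injective)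
  let gA : C(OnePoint A, E) :=
    OnePoint.continuousMapMk g 0
      (by rw [Filter.coclosedCompact_eq_cocompact]; exact hg0)
  obtain ⟨F, hF⟩ := ContinuousMap.exists_extension he gA
  refine ⟨fun x => F (some x), F.continuous.comp OnePoint.continuous_coe, ?_, ?_⟩
  · have hF0 : F OnePoint.infty = 0 := by
      have := ContinuousMap.congr_fun hF (OnePoint.infty : OnePoint A)
      simpa [e, gA, OnePoint.continuousMapMk] using this
    have := (OnePoint.continuous_iff F).mp F.continuous |>.1
    rw [Filter.coclosedCompact_eq_cocompact, hF0] at this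
    exact this
  · intro a
    have := ContinuousMap.congr_fun hF ((a : OnePoint A))
    simp [e, gA, OnePoint.continuousMapMk] at this; exact this

open MeasureTheory in
lemma lipschitz_cm_integral {K : Type*} [TopologicalSpace K] [CompactSpace K]
    [MeasurableSpace K] [OpensMeasurableSpace K] [SecondCountableTopology K]
    {E : Type*} [NormedAddCommGroup E] [NormedSpace ℝ E] [CompleteSpace E]
    (μ : Measure K) [IsProbabilityMeasure μ] :
    LipschitzWith 1 (fun ψ : C(K, E) => ∫ u, ψ u ∂μ) := by
  apply LipschitzWith.of_dist_le_mul
  intro ψ φ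
  have hint : ∀ χ : C(K, E), Integrable (⇑χ) μ := fun χ =>
    χ.continuous.integrable_of_hasCompactSupport (HasCompactSupport.of_compactSpace _)
  rw [NNReal.coe_one, one_mul, dist_eq_norm, dist_eq_norm, ← integral_sub (hint ψ) (hint φ)]
  have hb : ∀ᵐ u ∂μ, ‖ψ u - φ u‖ ≤ ‖ψ - φ‖ := by
    filter_upwards with u
    simpa using ContinuousMap.norm_coe_le_norm (ψ - φ) u
  calc ‖∫ u, (ψ u - φ u) ∂μ‖ ≤ ‖ψ - φ‖ * (μ Set.univ).toReal :=
        norm_integral_le_of_norm_le_const hb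
    _ = ‖ψ - φ‖ := by simp

end Aux

/-- Lemma 3.2(c): every `g ∈ C*(A, •)` on a closed invariant nonempty subset `A` of an
`n`-space `X` extends to some `g̃ ∈ C*(X, •)` with the same sup-norm. -/
theorem exists_equivariant_extension
    {n : ℕ} {X : Type*} [TopologicalSpace X] [MulAction (UG n) X] (hX : IsNSpace n X)
    (A : Set X) (hAclosed : IsClosed A) (hAne : A.Nonempty)
    (hAinv : ∀ (U : UG n) (a : X), a ∈ A → U • a ∈ A)
    (g : C(A, MatC n))
    (hg0 : Filter.Tendsto g (Filter.cocompact A) (nhds 0))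
    (hgeq : ∀ (U : UG n) (a : A), g ⟨U • (a : X), hAinv U a a.2⟩ = uConj U (g a)) :
    ∃ gt : C₀(X, MatC n), gt ∈ CstarN n X ∧ (∀ a : A, gt (a : X) = g a) ∧
      (⨆ a : A, ‖g a‖) = ⨆ x : X, ‖gt x‖ := by
  classical
  obtain ⟨hT2, hLC, hact, hcenter, hfree⟩ := hX
  haveI : T2Space X := hT2
  haveI : LocallyCompactSpace X := hLC
  haveI : Nonempty X := ⟨hAne.choose⟩
  haveI : Nonempty A := hAne.to_subtype
  -- boundedness of `g`
  obtain ⟨C, hC⟩ : ∃ C : ℝ, ∀ a : A, ‖g a‖ ≤ C := by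
    let gb : C₀(A, MatC n) := ⟨g, hg0⟩
    obtain ⟨C, hC⟩ := (isBounded_iff_forall_norm_le).mp gb.isBounded_range
    exact ⟨C, fun a => hC (g a) ⟨a, rfl⟩⟩
  have hbddg : BddAbove (Set.range fun a : A => ‖g a‖) :=
    ⟨C, by rintro - ⟨a, rfl⟩; exact hC a⟩
  set r : ℝ := ⨆ a : A, ‖g a‖ with hrdef
  have hgle : ∀ a : A, ‖g a‖ ≤ r := fun a => le_ciSup hbddg a
  have hrnonneg : 0 ≤ r := le_trans (norm_nonneg _) (hgle (Classical.arbitrary A))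
  rcases eq_or_lt_of_le hrnonneg with hr0 | hrpos
  · -- degenerate case : `g = 0`
    have hgzero : ∀ a : A, g a = 0 := fun a =>
      norm_le_zero_iff.mp (by rw [hr0]; exact hgle a)
    refine ⟨0, zero_mem _, fun a => (hgzero a).symm, ?_⟩
    rw [← hr0]
    symm
    simp only [ZeroAtInftyContinuousMap.coe_zero, Pi.zero_apply, norm_zero]
    exact ciSup_const
  -- main case : `r > 0`
  obtain ⟨f₀, hf₀cont, hf₀0, hf₀a⟩ := exists_c0_extension hAclosed g hg0
  -- truncation to the closed ball of radius `r`
  set c : MatC n → MatC n := fun M => (r / max r ‖M‖) • M with hcdef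
  have hmaxpos : ∀ M : MatC n, 0 < max r ‖M‖ := fun M => lt_max_of_lt_left hrpos
  have hccont : Continuous c :=
    (continuous_const.div (continuous_const.max continuous_norm)
      (fun M => (hmaxpos M).ne')).smul continuous_id
  have hcnorm : ∀ M : MatC n, ‖c M‖ ≤ r := by
    intro M
    have h1 : 0 ≤ r / max r ‖M‖ := div_nonneg hrnonneg (hmaxpos M).le
    calc ‖c M‖ = (r / max r ‖M‖) * ‖M‖ := by
          rw [hcdef]
          rw [norm_smul, Real.norm_eq_abs, abs_of_nonneg h1]
      _ ≤ (r / max r ‖M‖) * max r ‖M‖ := by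
          exact mul_le_mul_of_nonneg_left (le_max_right _ _) h1
      _ = r := div_mul_cancel₀ r (hmaxpos M).ne'
  have hceq : ∀ M : MatC n, ‖M‖ ≤ r → c M = M := by
    intro M hM
    rw [hcdef]
    simp only [max_eq_left hM, div_self hrpos.ne', one_smul]
  have hc0 : c 0 = 0 := smul_zero _
  -- the truncated extension
  set f₁ : X → MatC n := c ∘ f₀ with hf₁def
  have hf₁cont : Continuous f₁ := hccont.comp hf₀cont
  have hf₁0 : Filter.Tendsto f₁ (Filter.cocompact X) (nhds 0) := by
    have := (hccont.tendsto 0).comp hf₀0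
    rwa [hc0] at this
  have hf₁a : ∀ a : A, f₁ (a : X) = g a := by
    intro a
    rw [hf₁def, Function.comp_apply, hf₀a a, hceq _ (hgle a)]
  have hf₁le : ∀ x : X, ‖f₁ x‖ ≤ r := fun x => hcnorm _
  -- the averaged function
  set μ : MeasureTheory.Measure (UG n) := haarUG n with hμdef
  haveI : MeasureTheory.IsProbabilityMeasure μ :=
    inferInstanceAs (MeasureTheory.IsProbabilityMeasure (haarUG n))
  haveI : μ.IsMulLeftInvariant := inferInstanceAs ((haarUG n).IsMulLeftInvariant)
  have hFcont : Continuous fun p : X × UG n => uConj p.2 (f₁ (p.2⁻¹ • p.1)) := by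
    have hcoe : Continuous fun p : X × UG n => ((p.2 : MatC n)) :=
      continuous_subtype_val.comp continuous_snd
    have hactc : Continuous fun p : X × UG n => f₁ (p.2⁻¹ • p.1) :=
      hf₁cont.comp (hact.comp ((continuous_inv.comp continuous_snd).prodMk continuous_fst))
    have hstar : Continuous fun p : X × UG n => (star (p.2 : MatC n)) :=
      hcoe.matrix_conjTranspose
    exact (hcoe.matrix_mul hactc).matrix_mul hstar
  set F : C(X × UG n, MatC n) := ⟨fun p => uConj p.2 (f₁ (p.2⁻¹ • p.1)), hFcont⟩ with hFdef
  have hFint : ∀ x : X, MeasureTheory.Integrable (fun U : UG n => F (x, U)) μ := by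
    intro x
    exact (F.continuous.comp (Continuous.prodMk_right x)).integrable_of_hasCompactSupport
      (HasCompactSupport.of_compactSpace _)
  set h : X → MatC n := fun x => ∫ U : UG n, F (x, U) ∂μ with hhdef
  -- continuity
  have hhcont : Continuous h := by
    have : h = (fun ψ : C(UG n, MatC n) => ∫ U, ψ U ∂μ) ∘ fun x => F.curry x := by
      funext x; rfl
    rw [this]
    exact (lipschitz_cm_integral μ).continuous.comp F.curry.continuous
  -- norm bound
  have hhle : ∀ x : X, ‖h x‖ ≤ r := by
    intro x
    have hb : ∀ᵐ U ∂μ, ‖F (x, U)‖ ≤ r := by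
      filter_upwards with U
      show ‖uConj U (f₁ (U⁻¹ • x))‖ ≤ r
      rw [norm_uConj]; exact hf₁le _
    calc ‖h x‖ ≤ r * (μ Set.univ).toReal :=
          MeasureTheory.norm_integral_le_of_norm_le_const hb
      _ = r := by simp
  -- agreement on A
  have hha : ∀ a : A, h (a : X) = g a := by
    intro a
    have hconst : ∀ U : UG n, F ((a : X), U) = g a := by
      intro U
      show uConj U (f₁ (U⁻¹ • (a : X))) = g a
      have hmem : U⁻¹ • (a : X) ∈ A := hAinv U⁻¹ a a.2
      rw [show f₁ (U⁻¹ • (a : X)) = g ⟨U⁻¹ • (a : X), hmem⟩ from hf₁a ⟨_, hmem⟩]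
      have := (hgeq U ⟨U⁻¹ • (a : X), hmem⟩).symm
      rw [this]
      congr 1
      ext
      exact smul_inv_smul U (a : X)
    rw [hhdef]
    simp only [hconst]
    rw [MeasureTheory.integral_const]
    simp
  -- equivariance
  have hequiv : ∀ (V : UG n) (x : X), h (V • x) = uConj V (h x) := by
    intro V x
    have key := MeasureTheory.integral_mul_left_eq_self
      (μ := μ) (fun U : UG n => F (V • x, U)) V
    have hptwise : ∀ U : UG n, F (V • x, V * U) = uConjCLM V (F (x, U)) := by
      intro U
      show uConj (V * U) (f₁ ((V * U)⁻¹ • (V • x))) = uConjCLM V (uConj U (f₁ (U⁻¹ • x)))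
      have harg : (V * U)⁻¹ • (V • x) = U⁻¹ • x := by
        rw [mul_inv_rev, mul_smul, inv_smul_smul]
      rw [harg, uConjCLM_apply, uConj_mul]
    calc h (V • x) = ∫ U : UG n, F (V • x, V * U) ∂μ := key.symm
      _ = ∫ U : UG n, uConjCLM V (F (x, U)) ∂μ := by simp only [hptwise]
      _ = uConjCLM V (∫ U : UG n, F (x, U) ∂μ) :=
          ContinuousLinearMap.integral_comp_comm (uConjCLM V) (hFint x)
      _ = uConj V (h x) := rfl
  -- vanishing at infinity
  have hhC0 : Filter.Tendsto h (Filter.cocompact X) (nhds 0) := by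
    rw [Metric.tendsto_nhds]
    intro ε hε
    have hf := Metric.tendsto_nhds.mp hf₁0 (ε / 2) (half_pos hε)
    rw [Filter.hasBasis_cocompact.eventually_iff] at hf ⊢
    obtain ⟨K, hK, hKf⟩ := hf
    refine ⟨(fun p : UG n × X => p.1 • p.2) '' (Set.univ ×ˢ K),
      (isCompact_univ.prod hK).image hact, ?_⟩
    intro x hx
    have hnin : ∀ U : UG n, U⁻¹ • x ∉ K := by
      intro U hUK
      exact hx ⟨(U, U⁻¹ • x), ⟨Set.mem_univ _, hUK⟩, smul_inv_smul U x⟩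
    have hb : ∀ᵐ U ∂μ, ‖F (x, U)‖ ≤ ε / 2 := by
      filter_upwards with U
      show ‖uConj U (f₁ (U⁻¹ • x))‖ ≤ ε / 2
      rw [norm_uConj]
      have := hKf (hnin U)
      rw [dist_zero_right] at this
      exact this.le
    rw [dist_zero_right]
    calc ‖h x‖ ≤ (ε / 2) * (μ Set.univ).toReal :=
          MeasureTheory.norm_integral_le_of_norm_le_const hb
      _ = ε / 2 := by simp
      _ < ε := half_lt_self hε
  -- assemble
  refine ⟨⟨⟨h, hhcont⟩, hhC0⟩, ?_, ?_, ?_⟩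
  · intro U x
    exact hequiv U x
  · intro a
    exact hha a
  · have hbddh : BddAbove (Set.range fun x : X => ‖h x‖) :=
      ⟨r, by rintro - ⟨x, rfl⟩; exact hhle x⟩
    apply le_antisymm
    · refine ciSup_le fun a => ?_
      have : ‖g a‖ = ‖h (a : X)‖ := by rw [hha a]
      rw [this]
      exact le_ciSup hbddh ((a : X))
    · exact ciSup_le fun x => hhle x

end
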